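/- arXiv:0901.4023 — 4 statements merged into one kernel-verified Lean document; each statement's English description precedes it below -/
import Mathlib

section
/- Under the setup of Theorem 1, if μ is the uniform distribution on X (so μ(x) > 0 for all x ∈ X), Enc is perfectly secure, T₀ = X \ Z₁ where Z₁ = {x : StDec(x) begins with 1}, and T_{k+1} = T_k ∪ {Enc(x, 1u) : x ∈ T_k, u ∈ {0,1}*}, then the stabilized set T_{k₀} equals all of X. -/
/-- Coverage: with μ uniform on X, a perfectly secure and correctly decodable
stegosystem, T₀ = X \ Z₁ (Z₁ the words decoding to a message starting with 1)
and T_{k+1} = T_k ∪ {Enc(x,1u) : x ∈ T_k}, any stabilized set T_{k₀} equals X. -/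
theorem stmt9 (n m : ℕ) (X : Finset (Fin n → Bool)) (hXne : X.Nonempty)
    (Enc : (Fin n → Bool) → (Fin (m + 1) → Bool) → (Fin n → Bool))
    (StDec : (Fin n → Bool) → List Bool)
    (μ : (Fin n → Bool) → ℝ)
    (hμ : ∀ x, μ x = if x ∈ X then ((X.card : ℝ))⁻¹ else 0)
    (hsec : ∀ x' : Fin n → Bool,
      (∑ x, ∑ y : Fin (m + 1) → Bool,
        μ x * ((2 : ℝ) ^ (m + 1))⁻¹ * (if Enc x y = x' then 1 else 0)) = μ x')
    (hcorrect : ∀ x y, StDec (Enc x y) = (List.ofFn y).take (StDec (Enc x y)).length)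
    (Z₁ : Set (Fin n → Bool))
    (hZ₁ : Z₁ = {x | x ∈ X ∧ ∃ u : List Bool, StDec x = true :: u})
    (T : ℕ → Set (Fin n → Bool))
    (hT0 : T 0 = ↑X \ Z₁)
    (hTs : ∀ k, T (k + 1) =
      T k ∪ {x' | ∃ x ∈ T k, ∃ y : Fin (m + 1) → Bool, y 0 = true ∧ Enc x y = x'})
    (k₀ : ℕ) (hstab : ∀ k, k₀ ≤ k → T k = T k₀) :
    T k₀ = ↑X := by
  classical
  set c : ℝ := ((2 : ℝ) ^ (m + 1))⁻¹ with hc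
  have hcardpos : (0:ℝ) < (X.card : ℝ) := by exact_mod_cast Finset.card_pos.mpr hXne
  have hμnn : ∀ x, 0 ≤ μ x := by
    intro x; rw [hμ]
    split
    · positivity
    · exact le_rfl
  have hμposX : ∀ x ∈ X, 0 < μ x := by
    intro x hx; rw [hμ, if_pos hx]; positivity
  have c_pos : (0:ℝ) < c := by rw [hc]; positivity
  -- Enc maps X into X
  have hEncX : ∀ x ∈ X, ∀ y, Enc x y ∈ X := by
    intro x hx y
    by_contra h
    have h0 : μ (Enc x y) = 0 := by rw [hμ, if_neg h]
    have hsum := hsec (Enc x y)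
    rw [h0] at hsum
    have hinner : ∀ x₁, 0 ≤ ∑ y₁ : Fin (m+1) → Bool,
        μ x₁ * c * (if Enc x₁ y₁ = Enc x y then 1 else 0) := by
      intro x₁
      apply Finset.sum_nonneg
      intro y₁ _
      have := hμnn x₁
      positivity
    have h1 : (∑ y₁ : Fin (m+1) → Bool,
        μ x * c * (if Enc x y₁ = Enc x y then 1 else 0)) ≤ 0 := by
      exact le_of_le_of_eq (Finset.single_le_sum (f := fun x₁ => ∑ y₁ : Fin (m+1) → Bool,
        μ x₁ * c * (if Enc x₁ y₁ = Enc x y then 1 else 0))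
        (fun i _ => hinner i) (Finset.mem_univ x)) hsum
    have h2 : μ x * c * (if Enc x y = Enc x y then 1 else 0)
        ≤ ∑ y₁ : Fin (m+1) → Bool, μ x * c * (if Enc x y₁ = Enc x y then 1 else 0) := by
      apply Finset.single_le_sum (f := fun y₁ =>
        μ x * c * (if Enc x y₁ = Enc x y then 1 else 0)) _ (Finset.mem_univ y)
      intro y₁ _
      have := hμnn x
      positivity
    rw [if_pos rfl, mul_one] at h2
    have hpos := hμposX x hx
    nlinarith [h2.trans h1]
  have hmono : Monotone T :=
    monotone_nat_of_le_succ (fun k => by rw [hTs k]; exact Set.subset_union_left)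
  have hT0sub : T 0 ⊆ T k₀ := hmono (Nat.zero_le k₀)
  have hclos : ∀ x ∈ T k₀, ∀ y : Fin (m+1) → Bool, y 0 = true → Enc x y ∈ T k₀ := by
    intro x hx y hy
    have hmem : Enc x y ∈ T (k₀+1) := by
      rw [hTs k₀]; exact Or.inr ⟨x, hx, y, hy, rfl⟩
    rwa [hstab (k₀+1) (Nat.le_succ k₀)] at hmem
  have hTsubX : ∀ k, T k ⊆ ↑X := by
    intro k
    induction k with
    | zero => rw [hT0]; exact Set.diff_subset
    | succ k ih =>
      rw [hTs k]
      rintro x' (hx' | ⟨x, hx, y, hy, rfl⟩)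
      · exact ih hx'
      · exact hEncX x (ih hx) y
  have hfalse : ∀ x ∈ X, ∀ y : Fin (m+1) → Bool, y 0 = false → Enc x y ∈ T 0 := by
    intro x hx y hy
    rw [hT0]
    refine ⟨hEncX x hx y, ?_⟩
    rw [hZ₁]
    rintro ⟨-, u, hu⟩
    have hcor := hcorrect x y
    rw [hu, List.ofFn_succ] at hcor
    simp only [List.length_cons, List.take_succ_cons, List.cons.injEq] at hcor
    rw [hy] at hcor
    exact Bool.noConfusion hcor.1
  set Z : Finset (Fin n → Bool) := X.filter (fun x => x ∉ T k₀) with hZdef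
  set F : Finset (Fin (m+1) → Bool) :=
    Finset.univ.filter (fun y : Fin (m+1) → Bool => y 0 = true) with hFdef
  have key : ∑ x' ∈ Z, μ x' = ∑ x, ∑ y : Fin (m + 1) → Bool,
      μ x * c * (if Enc x y ∈ Z then 1 else 0) := by
    calc ∑ x' ∈ Z, μ x'
        = ∑ x' ∈ Z, ∑ x, ∑ y : Fin (m + 1) → Bool,
            μ x * c * (if Enc x y = x' then 1 else 0) := by
          exact Finset.sum_congr rfl fun x' _ => (hsec x').symm
      _ = ∑ x, ∑ x' ∈ Z, ∑ y : Fin (m + 1) → Bool,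
            μ x * c * (if Enc x y = x' then 1 else 0) := Finset.sum_comm
      _ = ∑ x, ∑ y : Fin (m + 1) → Bool, ∑ x' ∈ Z,
            μ x * c * (if Enc x y = x' then 1 else 0) := by
          exact Finset.sum_congr rfl fun x _ => Finset.sum_comm
      _ = ∑ x, ∑ y : Fin (m + 1) → Bool,
            μ x * c * (if Enc x y ∈ Z then 1 else 0) := by
          refine Finset.sum_congr rfl fun x _ => Finset.sum_congr rfl fun y _ => ?_
          rw [← Finset.mul_sum, Finset.sum_ite_eq]
  have hbound : ∀ x, ∀ y : Fin (m+1) → Bool,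
      μ x * c * (if Enc x y ∈ Z then 1 else 0)
        ≤ μ x * c * ((if x ∈ Z then 1 else 0) * (if y 0 = true then 1 else 0)) := by
    intro x y
    by_cases hEZ : Enc x y ∈ Z
    · by_cases hxX : x ∈ X
      · have hE := Finset.mem_filter.mp hEZ
        have hy : y 0 = true := by
          by_contra h
          have hy' : y 0 = false := by simpa using h
          exact hE.2 (hT0sub (hfalse x hxX y hy'))
        have hxS : x ∉ T k₀ := fun hxS => hE.2 (hclos x hxS y hy)
        have hxZ : x ∈ Z := Finset.mem_filter.mpr ⟨hxX, hxS⟩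
        simp [hEZ, hxZ, hy]
      · have h0 : μ x = 0 := by rw [hμ, if_neg hxX]
        simp [h0]
    · simp only [if_neg hEZ, mul_zero]
      have := hμnn x
      have h1 : (0:ℝ) ≤ (if x ∈ Z then (1:ℝ) else 0) := by positivity
      have h2 : (0:ℝ) ≤ (if y 0 = true then (1:ℝ) else 0) := by positivity
      positivity
  have hsumF : ∀ x, (∑ y : Fin (m+1) → Bool,
      μ x * c * ((if x ∈ Z then 1 else 0) * (if y 0 = true then 1 else 0)))
      = μ x * c * (if x ∈ Z then 1 else 0) * (F.card : ℝ) := by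
    intro x
    rw [← Finset.mul_sum]
    have : (∑ y : Fin (m+1) → Bool,
        (if x ∈ Z then (1:ℝ) else 0) * (if y 0 = true then 1 else 0))
        = (if x ∈ Z then (1:ℝ) else 0) * (F.card : ℝ) := by
      rw [← Finset.mul_sum, Finset.sum_boole, hFdef]
    rw [this]; ring
  have hFlt : (F.card : ℝ) < (2:ℝ) ^ (m + 1) := by
    have hss : F ⊂ Finset.univ := by
      refine Finset.ssubset_univ_iff.mpr ?_
      intro hFu
      have : (fun _ : Fin (m+1) => false) ∈ F := hFu ▸ Finset.mem_univ _
      simp [hFdef] at this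
    have := Finset.card_lt_card hss
    have hcu : (Finset.univ : Finset (Fin (m+1) → Bool)).card = 2 ^ (m+1) := by
      simp [Finset.card_univ]
    rw [hcu] at this
    exact_mod_cast this
  have hμZnn : (0:ℝ) ≤ ∑ x' ∈ Z, μ x' := Finset.sum_nonneg fun x _ => hμnn x
  have hineq : ∑ x' ∈ Z, μ x' ≤ (F.card : ℝ) * c * ∑ x' ∈ Z, μ x' := by
    calc ∑ x' ∈ Z, μ x'
        = ∑ x, ∑ y : Fin (m + 1) → Bool, μ x * c * (if Enc x y ∈ Z then 1 else 0) := key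
      _ ≤ ∑ x, ∑ y : Fin (m + 1) → Bool,
            μ x * c * ((if x ∈ Z then 1 else 0) * (if y 0 = true then 1 else 0)) :=
          Finset.sum_le_sum fun x _ => Finset.sum_le_sum fun y _ => hbound x y
      _ = ∑ x, μ x * c * (if x ∈ Z then 1 else 0) * (F.card : ℝ) :=
          Finset.sum_congr rfl fun x _ => hsumF x
      _ = (F.card : ℝ) * c * ∑ x' ∈ Z, μ x' := by
          rw [← Finset.sum_mul]
          have : (∑ x, μ x * c * (if x ∈ Z then (1:ℝ) else 0)) = c * ∑ x' ∈ Z, μ x' := by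
            rw [Finset.mul_sum]
            rw [← Finset.sum_filter_add_sum_filter_not Finset.univ (fun x => x ∈ Z)]
            have h1 : ∑ x ∈ Finset.univ.filter (fun x => x ∈ Z),
                μ x * c * (if x ∈ Z then (1:ℝ) else 0) = ∑ x ∈ Z, c * μ x := by
              rw [Finset.filter_univ_mem]
              exact Finset.sum_congr rfl fun x hx => by rw [if_pos hx]; ring
            have h2 : ∑ x ∈ Finset.univ.filter (fun x => x ∉ Z),
                μ x * c * (if x ∈ Z then (1:ℝ) else 0) = 0 := by
              apply Finset.sum_eq_zero
              intro x hx
              rw [if_neg (Finset.mem_filter.mp hx).2, mul_zero]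
            rw [h1, h2, add_zero]
          rw [this]; ring
  have hμZ0 : ∑ x' ∈ Z, μ x' = 0 := by
    have hFc : (F.card : ℝ) * c < 1 := by
      rw [hc]
      rw [mul_inv_lt_iff₀ (by positivity)]
      simpa using hFlt
    nlinarith
  have hZempty : ∀ x, x ∉ Z := by
    intro x hx
    have hle : μ x ≤ ∑ x' ∈ Z, μ x' :=
      Finset.single_le_sum (fun i _ => hμnn i) hx
    have hpos := hμposX x (Finset.mem_filter.mp hx).1
    rw [hμZ0] at hle
    linarith
  ext x
  constructor
  · intro hx; exact hTsubX k₀ hx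
  · intro hx
    by_contra h
    exact hZempty x (Finset.mem_filter.mpr ⟨hx, h⟩)
end

section
/- For every δ > 0 there exists, for each n, a distribution P_n on {0,1}^n with Shannon entropy h(P_n) ≥ n - 1, such that every perfectly secure stegosystem St_n for P_n with expected transmission speed v_n(St_n) ≥ δ satisfies log₂ K(St_n) ≥ c·n for some constant c > 0 and all sufficiently large n. -/
open Finset

section StegoAux

lemma choose_double_step {a b : ℕ} (hb : 1 ≤ b) (hab : 2*b ≤ a) :
    2 * Nat.choose (a-1) (b-1) ≤ Nat.choose a b := by
  have ha : 1 ≤ a := le_trans (by omega) hab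
  have key : a * Nat.choose (a-1) (b-1) = Nat.choose a b * b := by
    have := Nat.add_one_mul_choose_eq (a-1) (b-1)
    have h1 : a - 1 + 1 = a := Nat.succ_pred_eq_of_pos ha
    have h2 : b - 1 + 1 = b := Nat.succ_pred_eq_of_pos hb
    simpa [h1, h2, Nat.succ_eq_add_one] using this
  have : 2 * Nat.choose (a-1) (b-1) * b ≤ Nat.choose a b * b := by
    calc 2 * Nat.choose (a-1) (b-1) * b = (2*b) * Nat.choose (a-1) (b-1) := by ring
    _ ≤ a * Nat.choose (a-1) (b-1) := Nat.mul_le_mul_right _ hab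
    _ = Nat.choose a b * b := key
  exact Nat.le_of_mul_le_mul_right this hb

lemma choose_shift (N h : ℕ) (hNh : 2*h ≤ N) :
    ∀ r, r ≤ h → 2^r * Nat.choose (N-r) (h-r) ≤ Nat.choose N h := by
  intro r
  induction r with
  | zero => intro _; simpa using Nat.le_refl _
  | succ r ih =>
    intro hr
    have hrh : r ≤ h := by omega
    refine le_trans ?_ (ih hrh)
    have hstep : 2 * Nat.choose (N - r - 1) (h - r - 1) ≤ Nat.choose (N-r) (h-r) :=
      choose_double_step (by omega) (by omega)
    have e1 : N-(r+1) = N - r - 1 := by omega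
    have e2 : h-(r+1) = h - r - 1 := by omega
    rw [e1, e2, pow_succ]
    calc 2^r * 2 * Nat.choose (N-r-1) (h-r-1)
        = 2^r * (2 * Nat.choose (N - r - 1) (h - r - 1)) := by ring
    _ ≤ 2^r * Nat.choose (N-r) (h-r) := Nat.mul_le_mul_left _ hstep

lemma subset_count {α : Type*} [Fintype α] [DecidableEq α] (R : Finset α) (h : ℕ) :
    ((univ.powersetCard h).filter (fun X => R ⊆ X)).card
      ≤ Nat.choose (Fintype.card α - R.card) (h - R.card) := by
  classical
  have := Finset.card_le_card_of_injOn (f := fun X => X \ R)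
    (s := (univ.powersetCard h).filter (fun X => R ⊆ X))
    (t := (univ \ R).powersetCard (h - R.card)) ?_ ?_
  · simpa [Finset.card_powersetCard, Finset.card_sdiff_of_subset (Finset.subset_univ R)] using this
  · intro X hX
    simp only [Finset.mem_coe, mem_filter, Finset.mem_powersetCard] at hX
    obtain ⟨⟨-, hcard⟩, hRX⟩ := hX
    simp only [Finset.mem_coe, Finset.mem_powersetCard]
    constructor
    · exact fun x hx => by
        simp only [Finset.mem_sdiff] at hx ⊢
        exact ⟨Finset.mem_univ _, hx.2⟩
    · rw [Finset.card_sdiff_of_subset hRX, hcard]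
  · intro X hX Y hY hXY
    simp only [coe_filter, Set.mem_setOf_eq, Finset.mem_powersetCard] at hX hY
    dsimp only at hXY
    have : X \ R ∪ R = Y \ R ∪ R := by rw [hXY]
    rwa [Finset.sdiff_union_of_subset hX.2, Finset.sdiff_union_of_subset hY.2] at this

lemma exists_good_set {α ι : Type*} [Fintype α] [DecidableEq α] [DecidableEq ι]
    (I : Finset ι) (R : ι → Finset α) (h r : ℕ)
    (hh : 2 * h ≤ Fintype.card α) (hrh : r ≤ h)
    (hI : I.card < 2 ^ r) :
    ∃ X : Finset α, X.card = h ∧ ∀ i ∈ I, ¬ (r ≤ (R i).card ∧ R i ⊆ X) := by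
  classical
  set U : Finset (Finset α) := univ.powersetCard h with hU
  set Bad : Finset (Finset α) :=
    I.biUnion (fun i => U.filter (fun X => r ≤ (R i).card ∧ R i ⊆ X)) with hBad
  have hper : ∀ i : ι, (U.filter (fun X => r ≤ (R i).card ∧ R i ⊆ X)).card
      ≤ Nat.choose (Fintype.card α - r) (h - r) := by
    intro i
    by_cases hc : r ≤ (R i).card
    · obtain ⟨R', hR'sub, hR'card⟩ := Finset.exists_subset_card_eq hc
      have hsub : (U.filter (fun X => r ≤ (R i).card ∧ R i ⊆ X))
          ⊆ (U.filter (fun X => R' ⊆ X)) := by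
        intro X hX
        simp only [mem_filter] at hX ⊢
        exact ⟨hX.1, hR'sub.trans hX.2.2⟩
      calc (U.filter (fun X => r ≤ (R i).card ∧ R i ⊆ X)).card
          ≤ (U.filter (fun X => R' ⊆ X)).card := Finset.card_le_card hsub
        _ ≤ Nat.choose (Fintype.card α - R'.card) (h - R'.card) := subset_count R' h
        _ = Nat.choose (Fintype.card α - r) (h - r) := by rw [hR'card]
    · have : (U.filter (fun X => r ≤ (R i).card ∧ R i ⊆ X)) = ∅ := by
        refine Finset.filter_false_of_mem ?_
        intro X _hX hcon
        exact hc hcon.1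
      simp [this]
  have hBadcard : Bad.card < U.card := by
    have h1 : Bad.card ≤ I.card * Nat.choose (Fintype.card α - r) (h - r) := by
      refine le_trans (Finset.card_biUnion_le) ?_
      calc (∑ i ∈ I, (U.filter (fun X => r ≤ (R i).card ∧ R i ⊆ X)).card)
          ≤ ∑ _i ∈ I, Nat.choose (Fintype.card α - r) (h - r) :=
            Finset.sum_le_sum (fun i _ => hper i)
        _ = I.card * Nat.choose (Fintype.card α - r) (h - r) := by
            rw [Finset.sum_const, smul_eq_mul]
    have hUcard : U.card = Nat.choose (Fintype.card α) h := by
      simp [hU, Finset.card_powersetCard]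
    have hpos : 0 < Nat.choose (Fintype.card α) h :=
      Nat.choose_pos (by omega)
    by_cases hz : Nat.choose (Fintype.card α - r) (h - r) = 0
    · rw [hz, Nat.mul_zero, Nat.le_zero] at h1
      omega
    · have h2 : I.card * Nat.choose (Fintype.card α - r) (h - r)
          < 2^r * Nat.choose (Fintype.card α - r) (h - r) :=
        (Nat.mul_lt_mul_right (Nat.pos_of_ne_zero hz)).mpr hI
      have h3 := choose_shift (Fintype.card α) h hh r hrh
      omega
  have : (U \ Bad).Nonempty := by
    apply Finset.card_pos.mp
    have : Bad ∩ U = Bad := by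
      apply Finset.inter_eq_left.mpr
      intro X hX
      simp only [hBad, Finset.mem_biUnion] at hX
      obtain ⟨i, _, hX⟩ := hX
      exact (Finset.mem_filter.mp hX).1
    have hle := Finset.card_sdiff_add_card_inter U Bad
    rw [Finset.inter_comm, this] at hle
    omega
  obtain ⟨X, hX⟩ := this
  rw [Finset.mem_sdiff] at hX
  refine ⟨X, ?_, ?_⟩
  · exact (Finset.mem_powersetCard.mp hX.1).2
  · intro i hi hcon
    apply hX.2
    simp only [hBad, Finset.mem_biUnion]
    exact ⟨i, hi, Finset.mem_filter.mpr ⟨hX.1, hcon⟩⟩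

lemma pow16 (k : ℕ) (hk : 1 ≤ k) : 8*k*k + 2*k + 2 ≤ 16 ^ k := by
  induction k with
  | zero => omega
  | succ k ih =>
    rcases Nat.eq_zero_or_pos k with rfl | hk'
    · norm_num
    · have h16 : 16 ^ (k+1) = 16 * 16 ^ k := by rw [pow_succ]; ring
      have hih := ih hk'
      nlinarith [hih]

lemma arith_main (k n : ℕ) (hk : 2 ≤ k) (hn : 32 * k * k ≤ n) :
    k * (2 ^ (n / (8 * k) + 1) + n + 1) ≤ 2 ^ (n / k) := by
  set a := n / (8*k) with ha
  have h8k : 0 < 8*k := by omega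
  have ha4k : 4*k ≤ a := by
    rw [ha, Nat.le_div_iff_mul_le h8k]
    calc 4*k*(8*k) = 32*k*k := by ring
    _ ≤ n := hn
  have hpow : 8*k*k + 2*k + 2 ≤ 2 ^ a := by
    calc 8*k*k + 2*k + 2 ≤ 16 ^ k := pow16 k (by omega)
    _ = 2 ^ (4*k) := by rw [pow_mul]; norm_num
    _ ≤ 2 ^ a := Nat.pow_le_pow_right (by norm_num) ha4k
  have han : 8*a ≤ n / k := by
    rw [Nat.le_div_iff_mul_le (by omega : 0 < k)]
    calc 8*a*k = a*(8*k) := by ring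
    _ ≤ n := by rw [ha]; exact Nat.div_mul_le_self n (8*k)
  have hn1 : n + 1 ≤ 8*k*a + 8*k := by
    have hmod := Nat.div_add_mod n (8*k)
    rw [← ha] at hmod
    have hlt := Nat.mod_lt n h8k
    omega
  have ha1 : 1 ≤ a := by omega
  have h2k : 2*k ≤ 2^a := by nlinarith [hpow]
  have h8kk : 8*k*k ≤ 2^a := by nlinarith [hpow]
  have hA1 : a + 1 ≤ 2 ^ a := Nat.lt_two_pow_self
  have h2 : 2^(a+1) = 2*2^a := by rw [pow_succ]; ring
  calc k * (2 ^ (a + 1) + n + 1)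
      ≤ k * (2 * 2^a + (8*k*a + 8*k)) := Nat.mul_le_mul_left _ (by omega)
  _ = 2*k*2^a + 8*k*k*(a+1) := by ring
  _ ≤ 2^a*2^a + 2^a*2^a := by
        have t1 : 2*k*2^a ≤ 2^a*2^a := Nat.mul_le_mul h2k (Nat.le_refl _)
        have t2 : 8*k*k*(a+1) ≤ 2^a*2^a := Nat.mul_le_mul h8kk hA1
        omega
  _ ≤ 2^(2*a+1) := by
        have he : 2^(2*a+1) = 2^a*2^a*2 := by rw [pow_succ, two_mul, pow_add]
        omega
  _ ≤ 2^(8*a) := Nat.pow_le_pow_right (by norm_num) (by omega)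
  _ ≤ 2^(n/k) := Nat.pow_le_pow_right (by norm_num) han

end StegoAux

lemma stepB {n : ℕ} (E : (Fin n → Bool) → (Fin n → Bool) → (Fin n → Bool))
    (d : (Fin n → Bool) → List Bool)
    (X : Finset (Fin n → Bool)) (hX : X.card = 2^(n-1))
    (δ' : ℝ) (hδ0 : 0 < δ') (L : ℕ) (hLn : L ≤ n) (hn : 1 ≤ n)
    (hLδ : (L : ℝ) ≤ δ' * n / 2)
    (hdec : ∀ x y, d (E x y) = (List.ofFn y).take (d (E x y)).length)
    (hsec : ∀ x', (∑ x, ∑ y, (if x ∈ X then ((2:ℝ)^(n-1))⁻¹ else 0) * ((2 : ℝ) ^ n)⁻¹ *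
        (if E x y = x' then 1 else 0)) = (if x' ∈ X then ((2:ℝ)^(n-1))⁻¹ else 0))
    (hspeed : (∑ x, ∑ y, (if x ∈ X then ((2:ℝ)^(n-1))⁻¹ else 0) * ((2 : ℝ) ^ n)⁻¹ *
        ((d (E x y)).length : ℝ)) ≥ δ' * n) :
    ∃ xs, ((δ'/2) * 2^L ≤
        ((((univ.filter (fun y => L ≤ (d (E xs y)).length)).image (E xs)).card : ℕ) : ℝ))
       ∧ ((univ.filter (fun y => L ≤ (d (E xs y)).length)).image (E xs)) ⊆ X := by
  classical
  set Big : (Fin n → Bool) → Finset (Fin n → Bool) :=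
    fun x => univ.filter (fun y => L ≤ (d (E x y)).length) with hBig
  -- basic positivity
  have hcard : ((univ : Finset (Fin n → Bool))).card = 2^n := by
    simp [Finset.card_univ]
  -- length bound
  have hlen : ∀ x y, (d (E x y)).length ≤ n := by
    intro x y
    have h := congrArg List.length (hdec x y)
    rw [List.length_take, List.length_ofFn] at h
    omega
  -- closure
  have hcl : ∀ x ∈ X, ∀ y, E x y ∈ X := by
    intro x hx y
    by_contra hz
    have h0 := hsec (E x y)
    rw [if_neg hz] at h0
    have hnonneg : ∀ a ∈ (univ : Finset (Fin n → Bool)),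
        0 ≤ ∑ y', (if a ∈ X then ((2:ℝ)^(n-1))⁻¹ else 0) * ((2 : ℝ) ^ n)⁻¹ *
          (if E a y' = E x y then 1 else 0) := by
      intro a _
      apply Finset.sum_nonneg
      intro y' _
      positivity
    have hx0 := (Finset.sum_eq_zero_iff_of_nonneg hnonneg).mp h0 x (Finset.mem_univ x)
    have hnonneg2 : ∀ y' ∈ (univ : Finset (Fin n → Bool)),
        (0:ℝ) ≤ (if x ∈ X then ((2:ℝ)^(n-1))⁻¹ else 0) * ((2 : ℝ) ^ n)⁻¹ *
          (if E x y' = E x y then 1 else 0) := by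
      intro y' _; positivity
    have hy0 := (Finset.sum_eq_zero_iff_of_nonneg hnonneg2).mp hx0 y (Finset.mem_univ y)
    rw [if_pos hx, if_pos rfl] at hy0
    have : (0:ℝ) < ((2:ℝ)^(n-1))⁻¹ * ((2 : ℝ) ^ n)⁻¹ * 1 := by positivity
    rw [hy0] at this
    exact lt_irrefl 0 this
  -- speed sum over X
  have hsp2 : δ' * n * (2^(n-1) * 2^n) ≤
      ∑ x ∈ X, ∑ y, ((d (E x y)).length : ℝ) := by
    have e1 : (∑ x, ∑ y, (if x ∈ X then ((2:ℝ)^(n-1))⁻¹ else 0) * ((2 : ℝ) ^ n)⁻¹ *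
        ((d (E x y)).length : ℝ))
        = ((2:ℝ)^(n-1))⁻¹ * ((2:ℝ)^n)⁻¹ * ∑ x ∈ X, ∑ y, ((d (E x y)).length : ℝ) := by
      calc (∑ x, ∑ y, (if x ∈ X then ((2:ℝ)^(n-1))⁻¹ else 0) * ((2 : ℝ) ^ n)⁻¹ *
              ((d (E x y)).length : ℝ))
          = ∑ x, (if x ∈ X then
              ∑ y, ((2:ℝ)^(n-1))⁻¹ * ((2 : ℝ) ^ n)⁻¹ * ((d (E x y)).length : ℝ) else 0) := by
            apply Finset.sum_congr rfl
            intro x _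
            by_cases hx : x ∈ X
            · simp [hx]
            · simp [hx]
        _ = ∑ x ∈ X, ∑ y, ((2:ℝ)^(n-1))⁻¹ * ((2 : ℝ) ^ n)⁻¹ * ((d (E x y)).length : ℝ) := by
            rw [Finset.sum_ite_mem, Finset.univ_inter]
        _ = ((2:ℝ)^(n-1))⁻¹ * ((2:ℝ)^n)⁻¹ * ∑ x ∈ X, ∑ y, ((d (E x y)).length : ℝ) := by
            rw [Finset.mul_sum]
            apply Finset.sum_congr rfl
            intro x _
            rw [Finset.mul_sum]
    rw [e1] at hspeed
    have hpos : (0:ℝ) < (2:ℝ)^(n-1) * 2^n := by positivity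
    rw [ge_iff_le, ← sub_nonneg] at hspeed
    rw [← sub_nonneg]
    have := mul_nonneg (le_of_lt hpos) hspeed
    calc (0:ℝ) ≤ ((2:ℝ)^(n-1) * 2^n) *
        (((2:ℝ)^(n-1))⁻¹ * ((2:ℝ)^n)⁻¹ * (∑ x ∈ X, ∑ y, ((d (E x y)).length : ℝ)) - δ' * n) := this
      _ = (∑ x ∈ X, ∑ y, ((d (E x y)).length : ℝ)) - δ' * n * (2^(n-1) * 2^n) := by
          field_simp
  -- per-x bound, natural numbers
  have hperx : ∀ x, (∑ y, (d (E x y)).length) ≤ L * 2^n + n * (Big x).card := by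
    intro x
    rw [← Finset.sum_filter_add_sum_filter_not univ (fun y => L ≤ (d (E x y)).length)]
    have b1 : (∑ y ∈ univ.filter (fun y => L ≤ (d (E x y)).length), (d (E x y)).length)
        ≤ n * (Big x).card := by
      rw [hBig, mul_comm]
      calc (∑ y ∈ univ.filter (fun y => L ≤ (d (E x y)).length), (d (E x y)).length)
          ≤ ∑ _y ∈ univ.filter (fun y => L ≤ (d (E x y)).length), n :=
            Finset.sum_le_sum (fun y _ => hlen x y)
        _ = (univ.filter (fun y => L ≤ (d (E x y)).length)).card * n := by
            rw [Finset.sum_const, smul_eq_mul]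
    have b2 : (∑ y ∈ univ.filter (fun y => ¬ L ≤ (d (E x y)).length), (d (E x y)).length)
        ≤ L * 2^n := by
      calc (∑ y ∈ univ.filter (fun y => ¬ L ≤ (d (E x y)).length), (d (E x y)).length)
          ≤ ∑ _y ∈ univ.filter (fun y => ¬ L ≤ (d (E x y)).length), L := by
            apply Finset.sum_le_sum
            intro y hy
            rw [Finset.mem_filter] at hy
            omega
        _ = (univ.filter (fun y => ¬ L ≤ (d (E x y)).length)).card * L := by
            rw [Finset.sum_const, smul_eq_mul]
        _ ≤ 2^n * L := by
            apply Nat.mul_le_mul_right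
            calc (univ.filter (fun y => ¬ L ≤ (d (E x y)).length)).card
                ≤ (univ : Finset (Fin n → Bool)).card := Finset.card_le_card (Finset.filter_subset _ _)
              _ = 2^n := hcard
        _ = L * 2^n := by ring
    omega
  -- sum of Big cards
  have hBigsum : (δ'/2) * 2^(n-1) * 2^n ≤ ∑ x ∈ X, ((Big x).card : ℝ) := by
    have h1 : ∑ x ∈ X, ∑ y, ((d (E x y)).length : ℝ)
        ≤ ∑ x ∈ X, ((L : ℝ) * 2^n + n * ((Big x).card : ℝ)) := by
      apply Finset.sum_le_sum
      intro x _
      exact_mod_cast hperx x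
    have h2 : ∑ x ∈ X, ((L : ℝ) * 2^n + n * ((Big x).card : ℝ))
        = (2:ℝ)^(n-1) * ((L:ℝ) * 2^n) + n * ∑ x ∈ X, ((Big x).card : ℝ) := by
      rw [Finset.sum_add_distrib, Finset.sum_const, hX, Finset.mul_sum]
      push_cast
      ring
    have h3 : δ' * n * (2^(n-1) * 2^n) ≤ (2:ℝ)^(n-1) * ((L:ℝ) * 2^n) + n * ∑ x ∈ X, ((Big x).card : ℝ) :=
      le_trans hsp2 (le_trans h1 (le_of_eq h2))
    have hL2 : (2:ℝ)^(n-1) * ((L:ℝ) * 2^n) ≤ (δ' * n / 2) * (2^(n-1) * 2^n) := by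
      have hp : (0:ℝ) ≤ (2:ℝ)^(n-1) * 2^n := by positivity
      calc (2:ℝ)^(n-1) * ((L:ℝ) * 2^n) = (L:ℝ) * ((2:ℝ)^(n-1) * 2^n) := by ring
        _ ≤ (δ' * n / 2) * (2^(n-1) * 2^n) := mul_le_mul_of_nonneg_right hLδ hp
    have h4 : (δ' * n / 2) * (2^(n-1) * 2^n) ≤ n * ∑ x ∈ X, ((Big x).card : ℝ) := by nlinarith
    have hn0 : (0:ℝ) < n := by exact_mod_cast hn
    rw [show (δ'/2) * 2^(n-1) * 2^n = ((δ' * n / 2) * (2^(n-1) * 2^n)) / n by field_simp]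
    rw [div_le_iff₀ hn0]
    linarith [h4]
  -- pigeonhole
  have hXne : X.Nonempty := by
    apply Finset.card_pos.mp
    rw [hX]; positivity
  have hpig : ∃ xs ∈ X, (δ'/2) * 2^n ≤ ((Big xs).card : ℝ) := by
    by_contra hcon
    push_neg at hcon
    have : ∑ x ∈ X, ((Big x).card : ℝ) < ∑ _x ∈ X, (δ'/2) * 2^n :=
      Finset.sum_lt_sum_of_nonempty hXne (fun x hx => hcon x hx)
    rw [Finset.sum_const, hX, nsmul_eq_mul] at this
    push_cast at this
    nlinarith [hBigsum]
  obtain ⟨xs, hxsX, hxs⟩ := hpig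
  refine ⟨xs, ?_, ?_⟩
  · -- fiber counting
    have hfib : (Big xs).card ≤ ((Big xs).image (E xs)).card * 2^(n-L) := by
      have hsub : Big xs ⊆ ((Big xs).image (E xs)).biUnion
          (fun z => (Big xs).filter (fun y => E xs y = z)) := by
        intro y hy
        rw [Finset.mem_biUnion]
        exact ⟨E xs y, Finset.mem_image_of_mem _ hy, Finset.mem_filter.mpr ⟨hy, rfl⟩⟩
      calc (Big xs).card ≤ (((Big xs).image (E xs)).biUnion
            (fun z => (Big xs).filter (fun y => E xs y = z))).card := Finset.card_le_card hsub
        _ ≤ ∑ z ∈ (Big xs).image (E xs), ((Big xs).filter (fun y => E xs y = z)).card :=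
            Finset.card_biUnion_le
        _ ≤ ∑ _z ∈ (Big xs).image (E xs), 2^(n-L) := by
            apply Finset.sum_le_sum
            intro z hz
            -- fiber bound
            obtain ⟨y0, hy0Big, hy0⟩ := Finset.mem_image.mp hz
            have hzL : L ≤ (d z).length := by
              rw [← hy0]
              exact (Finset.mem_filter.mp hy0Big).2
            have hzn : (d z).length ≤ n := by rw [← hy0]; exact hlen xs y0
            -- prefix property: any y in the fiber has first L bits determined
            have hpre : ∀ y, E xs y = z → ∀ (iv : ℕ) (hiv : iv < L),
                y ⟨iv, lt_of_lt_of_le hiv hLn⟩ = (d z).get ⟨iv, lt_of_lt_of_le hiv hzL⟩ := by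
              intro y hy iv hiv
              have hd := hdec xs y
              rw [hy] at hd
              have hivlen : iv < (d z).length := lt_of_lt_of_le hiv hzL
              have hivn : iv < n := lt_of_lt_of_le hiv hLn
              have hget : (d z).get ⟨iv, hivlen⟩ = (List.ofFn y).get ⟨iv, by
                  rw [List.length_ofFn]; exact hivn⟩ := by
                have hpfx : (d z) <+: List.ofFn y := by
                  rw [hd]; exact List.take_prefix _ _
                have := List.IsPrefix.getElem hpfx hivlen
                simpa [List.get_eq_getElem] using this
              rw [hget]
              simp [List.get_ofFn]
            have hinj : ((Big xs).filter (fun y => E xs y = z)).card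
                ≤ (univ : Finset (Fin (n-L) → Bool)).card := by
              apply Finset.card_le_card_of_injOn
                (f := fun y => (fun i : Fin (n-L) => y ⟨L + i.1, by omega⟩))
              · intro y _; exact Finset.mem_univ _
              · intro y hy y' hy' heq
                rw [Finset.coe_filter, Set.mem_setOf_eq] at hy hy'
                funext i
                obtain ⟨iv, hivn⟩ := i
                by_cases hivL : iv < L
                · rw [hpre y hy.2 iv hivL, hpre y' hy'.2 iv hivL]
                · have hfun := congrFun heq ⟨iv - L, by omega⟩
                  simp only at hfun
                  have hivLL : L + (iv - L) = iv := by omega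
                  convert hfun using 2 <;> simp [hivLL]
            calc ((Big xs).filter (fun y => E xs y = z)).card
                ≤ (univ : Finset (Fin (n-L) → Bool)).card := hinj
              _ = 2^(n-L) := by simp [Finset.card_univ]
        _ = ((Big xs).image (E xs)).card * 2^(n-L) := by
            rw [Finset.sum_const, smul_eq_mul]
    -- conclude
    have h2nL : ((2:ℝ))^(n-L) * 2^L = 2^n := by
      rw [← pow_add]
      congr 1
      omega
    have hfibR : ((Big xs).card : ℝ) ≤ (((Big xs).image (E xs)).card : ℝ) * 2^(n-L) := by
      exact_mod_cast hfib
    have himg : (univ.filter (fun y => L ≤ (d (E xs y)).length)).image (E xs)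
        = (Big xs).image (E xs) := by rw [hBig]
    rw [himg]
    have hp : (0:ℝ) < 2^(n-L) := by positivity
    rw [show (δ'/2) * (2:ℝ)^L = ((δ'/2) * 2^n) / 2^(n-L) by
      rw [← h2nL]; field_simp]
    rw [div_le_iff₀ hp]
    calc (δ'/2) * 2^n ≤ ((Big xs).card : ℝ) := hxs
      _ ≤ (((Big xs).image (E xs)).card : ℝ) * 2^(n-L) := hfibR
  · intro z hz
    obtain ⟨y, _, hy⟩ := Finset.mem_image.mp hz
    rw [← hy]
    exact hcl xs hxsX y

lemma stego_key
    (K : ∀ n : ℕ, (((Fin n → Bool) → (Fin n → Bool) → (Fin n → Bool)) ×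
        ((Fin n → Bool) → List Bool)) → ℕ)
    (hK : ∀ n m : ℕ,
      {St : ((Fin n → Bool) → (Fin n → Bool) → (Fin n → Bool)) ×
          ((Fin n → Bool) → List Bool) | K n St < m}.Finite ∧
      {St : ((Fin n → Bool) → (Fin n → Bool) → (Fin n → Bool)) ×
          ((Fin n → Bool) → List Bool) | K n St < m}.ncard < 2 ^ m)
    (δ' : ℝ) (hδ0 : 0 < δ') (k : ℕ) (hk2 : 2 ≤ k) (hkδ : 2 ≤ δ' * k)
    (n : ℕ) (hn : 32 * k * k ≤ n) :
    ∃ X : Finset (Fin n → Bool), X.card = 2^(n-1) ∧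
      ∀ E d, (∀ x y, d (E x y) = (List.ofFn y).take (d (E x y)).length) →
        (∀ x', (∑ x, ∑ y, (if x ∈ X then ((2:ℝ)^(n-1))⁻¹ else 0) * ((2:ℝ)^n)⁻¹ *
            (if E x y = x' then 1 else 0)) = (if x' ∈ X then ((2:ℝ)^(n-1))⁻¹ else 0)) →
        ((∑ x, ∑ y, (if x ∈ X then ((2:ℝ)^(n-1))⁻¹ else 0) * ((2:ℝ)^n)⁻¹ *
            ((d (E x y)).length : ℝ)) ≥ δ' * n) →
        2 ^ (n / (8*k) + 1) ≤ K n (E, d) := by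
  classical
  have hn1 : 1 ≤ n := le_trans (by nlinarith) hn
  set L : ℕ := n / k with hL
  set q : ℕ := n / (8*k) + 1 with hq
  set m : ℕ := 2 ^ q with hm
  set r : ℕ := m + n + 1 with hr
  have hkr : k * r ≤ 2 ^ L := by
    have h := arith_main k n hk2 hn
    rw [hr, hm, hq, hL]
    exact h
  have h2r : 2 * r ≤ 2 ^ L := le_trans (Nat.mul_le_mul_right r hk2) hkr
  have hLn1 : L ≤ n - 1 := by
    have h1 : n / k ≤ n / 2 := Nat.div_le_div_left hk2 (by norm_num)
    have h2 := Nat.div_add_mod n 2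
    have h3 := Nat.mod_lt n (show 0 < 2 by norm_num)
    omega
  have hLn : L ≤ n := le_trans hLn1 (Nat.sub_le n 1)
  have hrh : r ≤ 2^(n-1) := by
    have : (2:ℕ)^L ≤ 2^(n-1) := Nat.pow_le_pow_right (by norm_num) hLn1
    omega
  have h2h : 2 * 2^(n-1) ≤ Fintype.card (Fin n → Bool) := by
    have hcardfun : Fintype.card (Fin n → Bool) = 2^n := by simp
    have he : (2:ℕ)^n = 2^(n-1)*2 := by
      rw [← pow_succ]
      congr 1
      omega
    omega
  set S := (hK n m).1.toFinset with hS
  have hScard : S.card < 2 ^ m := by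
    have h := (hK n m).2
    rwa [Set.ncard_eq_toFinset_card _ (hK n m).1] at h
  set I := S ×ˢ (univ : Finset (Fin n → Bool)) with hI
  set R : ((((Fin n → Bool) → (Fin n → Bool) → (Fin n → Bool)) ×
      ((Fin n → Bool) → List Bool)) × (Fin n → Bool)) → Finset (Fin n → Bool) :=
    fun p => ((univ.filter (fun y => L ≤ (p.1.2 (p.1.1 p.2 y)).length)).image (p.1.1 p.2))
    with hR
  have hIcard : I.card < 2 ^ r := by
    rw [hI, Finset.card_product]
    have hu : (univ : Finset (Fin n → Bool)).card = 2^n := by simp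
    rw [hu]
    calc S.card * 2^n < 2^m * 2^n :=
          (Nat.mul_lt_mul_right (by positivity)).mpr hScard
      _ = 2^(m+n) := by rw [pow_add]
      _ < 2^r := Nat.pow_lt_pow_right (by norm_num) (by omega)
  obtain ⟨X, hXcard, hXav⟩ := exists_good_set I R (2^(n-1)) r h2h hrh hIcard
  refine ⟨X, hXcard, ?_⟩
  intro E d hdec hsec hspeed
  by_contra hcon
  push_neg at hcon
  have hES : (E, d) ∈ S := by
    rw [hS, Set.Finite.mem_toFinset]
    exact hcon
  have hkpos : (0:ℝ) < k := by
    have : (0:ℕ) < k := by omega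
    exact_mod_cast this
  have hLδ : (L:ℝ) ≤ δ' * n / 2 := by
    have h1 : (L:ℝ) ≤ (n:ℝ)/k := by
      rw [hL]
      exact_mod_cast Nat.cast_div_le
    have h2 : (n:ℝ)/k ≤ δ'*n/2 := by
      rw [div_le_div_iff₀ hkpos (by norm_num : (0:ℝ) < 2)]
      have hn0 : (0:ℝ) ≤ n := Nat.cast_nonneg n
      nlinarith [hkδ, hn0]
    linarith
  obtain ⟨xs, hxscard, hxssub⟩ := stepB E d X hXcard δ' hδ0 L hLn hn1 hLδ hdec hsec hspeed
  apply hXav ((E, d), xs) (Finset.mem_product.mpr ⟨hES, Finset.mem_univ xs⟩)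
  have hRE : R ((E, d), xs) = (univ.filter (fun y => L ≤ (d (E xs y)).length)).image (E xs) := rfl
  constructor
  · rw [hRE]
    have hcast : (k:ℝ) * (r:ℝ) ≤ (2:ℝ)^L := by exact_mod_cast hkr
    have h1 : (r:ℝ) ≤ (2:ℝ)^L / k := by
      rw [le_div_iff₀ hkpos, mul_comm]
      exact hcast
    have h2 : (2:ℝ)^L / k ≤ (δ'/2) * 2^L := by
      rw [div_le_iff₀ hkpos]
      nlinarith [pow_pos (show (0:ℝ) < 2 by norm_num) L, hkδ]
    have h3 : (r:ℝ) ≤ (((univ.filter (fun y => L ≤ (d (E xs y)).length)).image (E xs)).card : ℝ) :=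
      le_trans (le_trans h1 h2) hxscard
    exact_mod_cast h3
  · rw [hRE]
    exact hxssub

/-- Main theorem: for every δ > 0 there is a family of distributions P_n on
{0,1}^n with Shannon entropy ≥ n-1 such that every perfectly secure, correctly
decodable stegosystem with expected transmission speed ≥ δ has Kolmogorov
complexity K(St_n) with log₂ K(St_n) ≥ c·n for some c > 0 and all large n.
Here K is any complexity measure on stegosystems with the counting property. -/
theorem stmt11
    (K : ∀ n : ℕ,
      (((Fin n → Bool) → (Fin n → Bool) → (Fin n → Bool)) ×
        ((Fin n → Bool) → List Bool)) → ℕ)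
    (hK : ∀ n m : ℕ,
      {St : ((Fin n → Bool) → (Fin n → Bool) → (Fin n → Bool)) ×
          ((Fin n → Bool) → List Bool) | K n St < m}.Finite ∧
      {St : ((Fin n → Bool) → (Fin n → Bool) → (Fin n → Bool)) ×
          ((Fin n → Bool) → List Bool) | K n St < m}.ncard < 2 ^ m)
    (δ : ℝ) (hδ : 0 < δ) :
    ∃ P : (n : ℕ) → (Fin n → Bool) → ℝ,
      (∀ n : ℕ, (∀ x, 0 ≤ P n x) ∧ (∑ x, P n x) = 1 ∧
        -(∑ x, P n x * Real.logb 2 (P n x)) ≥ (n : ℝ) - 1) ∧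
      ∃ c : ℝ, 0 < c ∧ ∃ N : ℕ, ∀ n : ℕ, N ≤ n →
        ∀ StEnc : (Fin n → Bool) → (Fin n → Bool) → (Fin n → Bool),
        ∀ StDec : (Fin n → Bool) → List Bool,
          (∀ x y, StDec (StEnc x y) = (List.ofFn y).take (StDec (StEnc x y)).length) →
          (∀ x' : Fin n → Bool,
            (∑ x, ∑ y : Fin n → Bool,
              P n x * ((2 : ℝ) ^ n)⁻¹ * (if StEnc x y = x' then 1 else 0)) = P n x') →
          ((∑ x, ∑ y : Fin n → Bool,
              P n x * ((2 : ℝ) ^ n)⁻¹ * ((StDec (StEnc x y)).length : ℝ)) ≥ δ * n) →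
          Real.logb 2 ((K n (StEnc, StDec) : ℕ) : ℝ) ≥ c * n := by
  classical
  set δ' : ℝ := min δ 1 with hδ'def
  have hδ'0 : 0 < δ' := lt_min hδ one_pos
  have hδ'1 : δ' ≤ 1 := min_le_right _ _
  have hδ'δ : δ' ≤ δ := min_le_left _ _
  set k : ℕ := ⌈(2:ℝ)/δ'⌉₊ with hkdef
  have hk2 : 2 ≤ k := by
    have h2 : (2:ℝ) ≤ 2/δ' := by
      rw [le_div_iff₀ hδ'0]
      nlinarith
    calc (2:ℕ) = ⌈(2:ℝ)⌉₊ := by simp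
    _ ≤ k := Nat.ceil_le_ceil h2
  have hkδ : 2 ≤ δ' * k := by
    have hle := Nat.le_ceil ((2:ℝ)/δ')
    rw [div_le_iff₀ hδ'0] at hle
    rw [hkdef]
    nlinarith [hle]
  have hex : ∀ n : ℕ, ∃ X : Finset (Fin n → Bool), X.card = 2^(n-1) ∧
      (32*k*k ≤ n → ∀ E d, (∀ x y, d (E x y) = (List.ofFn y).take (d (E x y)).length) →
        (∀ x', (∑ x, ∑ y, (if x ∈ X then ((2:ℝ)^(n-1))⁻¹ else 0) * ((2:ℝ)^n)⁻¹ *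
            (if E x y = x' then 1 else 0)) = (if x' ∈ X then ((2:ℝ)^(n-1))⁻¹ else 0)) →
        ((∑ x, ∑ y, (if x ∈ X then ((2:ℝ)^(n-1))⁻¹ else 0) * ((2:ℝ)^n)⁻¹ *
            ((d (E x y)).length : ℝ)) ≥ δ' * n) →
        2 ^ (n / (8*k) + 1) ≤ K n (E, d)) := by
    intro n
    by_cases hn : 32*k*k ≤ n
    · obtain ⟨X, h1, h2⟩ := stego_key K hK δ' hδ'0 k hk2 hkδ n hn
      exact ⟨X, h1, fun _ => h2⟩
    · obtain ⟨X, -, hXc⟩ := Finset.exists_subset_card_eq (s := (univ : Finset (Fin n → Bool))) (n := 2^(n-1))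
        (by
          rw [Finset.card_univ]
          have : Fintype.card (Fin n → Bool) = 2^n := by simp
          rw [this]
          exact Nat.pow_le_pow_right (by norm_num) (Nat.sub_le n 1))
      exact ⟨X, hXc, fun h => absurd h hn⟩
  choose Xf hXcard hXgood using hex
  have hpne : ∀ n : ℕ, ((2:ℝ)^(n-1)) ≠ 0 := fun n => by positivity
  refine ⟨fun n x => if x ∈ Xf n then ((2:ℝ)^(n-1))⁻¹ else 0, ?_, ?_⟩
  · intro n
    refine ⟨?_, ?_, ?_⟩
    · intro x
      dsimp only
      split
      · positivity
      · exact le_refl 0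
    · dsimp only
      rw [Finset.sum_ite_mem, Finset.univ_inter, Finset.sum_const, hXcard n, nsmul_eq_mul]
      push_cast
      exact mul_inv_cancel₀ (hpne n)
    · dsimp only
      have hlb : Real.logb 2 ((2:ℝ)^(n-1)) = ((n-1:ℕ):ℝ) := by
        rw [Real.logb, Real.log_pow]
        have hl2 : Real.log 2 ≠ 0 := (Real.log_pos (by norm_num)).ne'
        field_simp
      have hsum : (∑ x, (if x ∈ Xf n then ((2:ℝ)^(n-1))⁻¹ else 0) *
          Real.logb 2 (if x ∈ Xf n then ((2:ℝ)^(n-1))⁻¹ else 0))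
          = -((n-1:ℕ):ℝ) := by
        have e1 : ∀ x, (if x ∈ Xf n then ((2:ℝ)^(n-1))⁻¹ else 0) *
            Real.logb 2 (if x ∈ Xf n then ((2:ℝ)^(n-1))⁻¹ else 0)
            = (if x ∈ Xf n then ((2:ℝ)^(n-1))⁻¹ * Real.logb 2 (((2:ℝ)^(n-1))⁻¹) else 0) := by
          intro x
          by_cases hx : x ∈ Xf n
          · simp [hx]
          · simp [hx]
        rw [Finset.sum_congr rfl (fun x _ => e1 x)]
        rw [Finset.sum_ite_mem, Finset.univ_inter, Finset.sum_const, hXcard n, nsmul_eq_mul]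
        rw [Real.logb_inv, hlb]
        push_cast
        field_simp
      rw [hsum]
      rcases Nat.eq_zero_or_pos n with rfl | hn1
      · norm_num
      · rw [Nat.cast_sub hn1]
        simp
  · refine ⟨1/(8*(k:ℝ)), by positivity, 32*k*k, ?_⟩
    intro n hNn StEnc StDec hdec hsec hspd
    have hn0 : (0:ℝ) ≤ n := Nat.cast_nonneg n
    have hspd' : (∑ x, ∑ y, (if x ∈ Xf n then ((2:ℝ)^(n-1))⁻¹ else 0) * ((2:ℝ)^n)⁻¹ *
        ((StDec (StEnc x y)).length : ℝ)) ≥ δ' * n := by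
      refine le_trans ?_ hspd
      exact mul_le_mul_of_nonneg_right hδ'δ hn0
    have hKb : 2 ^ (n / (8*k) + 1) ≤ K n (StEnc, StDec) :=
      hXgood n hNn StEnc StDec hdec hsec hspd'
    set q : ℕ := n / (8*k) + 1 with hqdef
    have h8kpos : 0 < 8*k := by omega
    have hnatq : n ≤ 8*k*q := by
      have hmod := Nat.div_add_mod n (8*k)
      have hlt := Nat.mod_lt n h8kpos
      have hqe : 8*k*q = 8*k*(n/(8*k)) + 8*k := by
        rw [hqdef, Nat.mul_succ]
      omega
    have hcn : 1/(8*(k:ℝ)) * n ≤ (q:ℝ) := by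
      have h8kR : (0:ℝ) < 8*(k:ℝ) := by
        have : (0:ℕ) < k := by omega
        have : (0:ℝ) < (k:ℝ) := by exact_mod_cast this
        linarith
      rw [div_mul_eq_mul_div, one_mul, div_le_iff₀ h8kR]
      have : (n:ℝ) ≤ 8*(k:ℝ)*(q:ℝ) := by exact_mod_cast hnatq
      linarith
    have hlbq : Real.logb 2 ((2:ℝ)^q) = (q:ℝ) := by
      rw [Real.logb, Real.log_pow]
      have hl2 : Real.log 2 ≠ 0 := (Real.log_pos (by norm_num)).ne'
      field_simp
    have hKpos : (0:ℝ) < (2:ℝ)^q := by positivity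
    have hKle : (2:ℝ)^q ≤ ((K n (StEnc, StDec) : ℕ) : ℝ) := by
      exact_mod_cast hKb
    calc 1/(8*(k:ℝ)) * n ≤ (q:ℝ) := hcn
      _ = Real.logb 2 ((2:ℝ)^q) := hlbq.symm
      _ ≤ Real.logb 2 ((K n (StEnc, StDec) : ℕ) : ℝ) :=
          Real.logb_le_logb_of_le (b := 2) (by norm_num) hKpos hKle
end

section
/- In the two-letter i.i.d. stegosystem, if the covertext letters are i.i.d. with P(a) = p, P(b) = 1 - p, and the secret bits are i.i.d. uniform and independent of the covertext, then the output of the encoder has the same distribution as the input covertext, i.e., the system is perfectly secure. -/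
/-- The encoder of the two-letter i.i.d. stegosystem (a = false, b = true,
covertext given as a list of pairs; ab = (false,true) codes 0, ba codes 1). -/
def stegEncode : List (Bool × Bool) → (ℕ → Bool) → List (Bool × Bool)
  | [], _ => []
  | p :: rest, y =>
    if p.1 = p.2 then p :: stegEncode rest y
    else (y 0, !(y 0)) :: stegEncode rest (fun i => y (i + 1))

lemma sum_pi_succ {α : Type*} [Fintype α] (n : ℕ) (g : (Fin (n + 1) → α) → ℝ) :
    ∑ x : Fin (n + 1) → α, g x = ∑ a : α, ∑ x0 : Fin n → α, g (Fin.cons a x0) := by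
  rw [← Equiv.sum_comp (Fin.consEquiv fun _ => α) g, Fintype.sum_prod_type]
  rfl

lemma ite_and_mul (A B : Prop) [Decidable A] [Decidable B] :
    (if A ∧ B then (1 : ℝ) else 0) = (if A then 1 else 0) * (if B then 1 else 0) := by
  split_ifs <;> simp_all

lemma pad_shift (M : ℕ) (b : Bool) (y0 : Fin M → Bool) :
    (fun i : ℕ => if h : i + 1 < M + 1 then (Fin.cons b y0 : Fin (M + 1) → Bool) ⟨i + 1, h⟩ else false)
    = fun i => if h : i < M then y0 ⟨i, h⟩ else false := by
  funext i
  by_cases h : i < M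
  · rw [dif_pos (by omega : i + 1 < M + 1), dif_pos h]
    exact Fin.cons_succ (α := fun _ => Bool) b y0 ⟨i, h⟩
  · rw [dif_neg (by omega), dif_neg h]

lemma key (w : Bool × Bool → ℝ) (hab : w (false, true) = w (true, false)) :
    ∀ (n N : ℕ), n ≤ N → ∀ x' : Fin n → Bool × Bool,
      (∑ x : Fin n → Bool × Bool, ∑ y : Fin N → Bool,
        (∏ i, w (x i)) * ((2 : ℝ) ^ N)⁻¹ *
          (if stegEncode (List.ofFn x) (fun i => if h : i < N then y ⟨i, h⟩ else false)
              = List.ofFn x' then 1 else 0))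
        = ∏ i, w (x' i) := by
  intro n
  induction n with
  | zero =>
    intro N _ x'
    simp [stegEncode, Finset.sum_const, Finset.card_univ, Fintype.card_fun]
  | succ n ih =>
    intro N hN x'
    obtain ⟨M, rfl⟩ : ∃ M, N = M + 1 := ⟨N - 1, by omega⟩
    have hM : n ≤ M + 1 := by omega
    have hM' : n ≤ M := by omega
    set P : ℝ := ∏ i : Fin n, w (x' i.succ) with hP
    rw [sum_pi_succ]
    have hterm : ∀ a : Bool × Bool,
        (∑ x0 : Fin n → Bool × Bool, ∑ y : Fin (M + 1) → Bool,
          (∏ i, w ((Fin.cons a x0 : Fin (n+1) → Bool × Bool) i)) * ((2 : ℝ) ^ (M + 1))⁻¹ *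
            (if stegEncode (List.ofFn (Fin.cons a x0 : Fin (n+1) → Bool × Bool))
                (fun i => if h : i < M + 1 then y ⟨i, h⟩ else false)
                = List.ofFn x' then 1 else 0))
        = (if a.1 = a.2 then (if a = x' 0 then 1 else 0) * w a * P
           else w a * (2 : ℝ)⁻¹ *
             (((if ((true : Bool), (false : Bool)) = x' 0 then (1:ℝ) else 0)
               + (if ((false : Bool), (true : Bool)) = x' 0 then 1 else 0)) * P)) := by
      intro a
      have hof : ∀ x0 : Fin n → Bool × Bool,
          List.ofFn (Fin.cons a x0 : Fin (n+1) → Bool × Bool) = a :: List.ofFn x0 := by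
        intro x0
        rw [List.ofFn_succ]
        simp
      have hprod : ∀ x0 : Fin n → Bool × Bool,
          (∏ i, w ((Fin.cons a x0 : Fin (n+1) → Bool × Bool) i)) = w a * ∏ i, w (x0 i) := by
        intro x0
        rw [Fin.prod_univ_succ]
        simp
      by_cases ha : a.1 = a.2
      · rw [if_pos ha]
        calc (∑ x0 : Fin n → Bool × Bool, ∑ y : Fin (M + 1) → Bool,
          (∏ i, w ((Fin.cons a x0 : Fin (n+1) → Bool × Bool) i)) * ((2 : ℝ) ^ (M + 1))⁻¹ *
            (if stegEncode (List.ofFn (Fin.cons a x0 : Fin (n+1) → Bool × Bool))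
                (fun i => if h : i < M + 1 then y ⟨i, h⟩ else false)
                = List.ofFn x' then 1 else 0))
            = ∑ x0 : Fin n → Bool × Bool, ∑ y : Fin (M + 1) → Bool,
              ((if a = x' 0 then 1 else 0) * w a) *
              ((∏ i, w (x0 i)) * ((2 : ℝ) ^ (M + 1))⁻¹ *
              (if stegEncode (List.ofFn x0)
                (fun i => if h : i < M + 1 then y ⟨i, h⟩ else false)
                = List.ofFn (fun i : Fin n => x' i.succ) then 1 else 0)) := by
                apply Finset.sum_congr rfl; intro x0 _
                apply Finset.sum_congr rfl; intro y _
                rw [hprod, hof x0]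
                rw [List.ofFn_succ (f := x'), show stegEncode (a :: List.ofFn x0)
                  (fun i => if h : i < M + 1 then y ⟨i, h⟩ else false)
                  = a :: stegEncode (List.ofFn x0)
                    (fun i => if h : i < M + 1 then y ⟨i, h⟩ else false) from by
                    simp [stegEncode, ha]]
                simp only [List.cons_eq_cons, ite_and_mul]
                ring
          _ = ((if a = x' 0 then 1 else 0) * w a) *
              ∑ x0 : Fin n → Bool × Bool, ∑ y : Fin (M + 1) → Bool,
              ((∏ i, w (x0 i)) * ((2 : ℝ) ^ (M + 1))⁻¹ *
              (if stegEncode (List.ofFn x0)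
                (fun i => if h : i < M + 1 then y ⟨i, h⟩ else false)
                = List.ofFn (fun i : Fin n => x' i.succ) then 1 else 0)) := by
                rw [Finset.mul_sum]
                apply Finset.sum_congr rfl; intro x0 _
                rw [Finset.mul_sum]
          _ = (if a = x' 0 then 1 else 0) * w a * P := by
                rw [ih (M + 1) hM (fun i => x' i.succ)]
      · rw [if_neg ha]
        calc (∑ x0 : Fin n → Bool × Bool, ∑ y : Fin (M + 1) → Bool,
          (∏ i, w ((Fin.cons a x0 : Fin (n+1) → Bool × Bool) i)) * ((2 : ℝ) ^ (M + 1))⁻¹ *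
            (if stegEncode (List.ofFn (Fin.cons a x0 : Fin (n+1) → Bool × Bool))
                (fun i => if h : i < M + 1 then y ⟨i, h⟩ else false)
                = List.ofFn x' then 1 else 0))
            = ∑ x0 : Fin n → Bool × Bool, ∑ b : Bool, ∑ y0 : Fin M → Bool,
              (w a * (2 : ℝ)⁻¹ * (if ((b, !b) : Bool × Bool) = x' 0 then 1 else 0)) *
              ((∏ i, w (x0 i)) * ((2 : ℝ) ^ M)⁻¹ *
              (if stegEncode (List.ofFn x0)
                (fun i => if h : i < M then y0 ⟨i, h⟩ else false)
                = List.ofFn (fun i : Fin n => x' i.succ) then 1 else 0)) := by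
                apply Finset.sum_congr rfl; intro x0 _
                rw [sum_pi_succ]
                apply Finset.sum_congr rfl; intro b _
                apply Finset.sum_congr rfl; intro y0 _
                rw [hprod, hof x0, List.ofFn_succ (f := x')]
                have e1 : stegEncode (a :: List.ofFn x0)
                    (fun i => if h : i < M + 1 then
                      (Fin.cons b y0 : Fin (M+1) → Bool) ⟨i, h⟩ else false)
                    = ((b, !b) : Bool × Bool) :: stegEncode (List.ofFn x0)
                      (fun i => if h : i < M then y0 ⟨i, h⟩ else false) := by
                  simp only [stegEncode, if_neg ha]
                  rw [show (if h : (0:ℕ) < M + 1 then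
                      (Fin.cons b y0 : Fin (M+1) → Bool) ⟨0, h⟩ else false) = b from by simp]
                  rw [show (fun i : ℕ => if h : i + 1 < M + 1 then
                      (Fin.cons b y0 : Fin (M+1) → Bool) ⟨i + 1, h⟩ else false)
                      = fun i => if h : i < M then y0 ⟨i, h⟩ else false from pad_shift M b y0]
                rw [e1]
                simp only [List.cons_eq_cons, ite_and_mul]
                rw [pow_succ, mul_inv]
                ring
          _ = ∑ b : Bool,
              (w a * (2 : ℝ)⁻¹ * (if ((b, !b) : Bool × Bool) = x' 0 then 1 else 0)) *
              (∑ x0 : Fin n → Bool × Bool, ∑ y0 : Fin M → Bool,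
              ((∏ i, w (x0 i)) * ((2 : ℝ) ^ M)⁻¹ *
              (if stegEncode (List.ofFn x0)
                (fun i => if h : i < M then y0 ⟨i, h⟩ else false)
                = List.ofFn (fun i : Fin n => x' i.succ) then 1 else 0))) := by
                rw [Finset.sum_comm]
                apply Finset.sum_congr rfl; intro b _
                rw [Finset.mul_sum]
                apply Finset.sum_congr rfl; intro x0 _
                rw [Finset.mul_sum]
          _ = w a * (2 : ℝ)⁻¹ *
             (((if ((true : Bool), (false : Bool)) = x' 0 then (1:ℝ) else 0)
               + (if ((false : Bool), (true : Bool)) = x' 0 then 1 else 0)) * P) := by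
                rw [ih M hM' (fun i => x' i.succ), Fintype.sum_bool]
                simp only [Bool.not_true, Bool.not_false]
                ring
    rw [Finset.sum_congr rfl (fun a _ => hterm a)]
    rw [Fin.prod_univ_succ, Fintype.sum_prod_type]
    rw [← hP]
    rcases hx : x' 0 with ⟨c, d⟩
    cases c <;> cases d <;>
      simp [Fintype.sum_bool, Prod.ext_iff] <;>
      first
        | ring1
        | (rw [hab]; ring1)

/-- Perfect security of the two-letter i.i.d. stegosystem: if the covertext
letters are i.i.d. with P(a) = p, P(b) = 1-p (so a pair q has probability
w(q)), and the secret bits are i.i.d. uniform and independent of the covertext,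
then the encoder's output has the same distribution as the input covertext. -/
theorem stmt14 (m : ℕ) (p : ℝ) (hp0 : 0 ≤ p) (hp1 : p ≤ 1)
    (w : Bool × Bool → ℝ)
    (hw : ∀ q : Bool × Bool,
      w q = (if q.1 then 1 - p else p) * (if q.2 then 1 - p else p)) :
    ∀ x' : Fin m → Bool × Bool,
      (∑ x : Fin m → Bool × Bool, ∑ y : Fin m → Bool,
        (∏ i, w (x i)) * ((2 : ℝ) ^ m)⁻¹ *
          (if stegEncode (List.ofFn x) (fun i => if h : i < m then y ⟨i, h⟩ else false)
              = List.ofFn x' then 1 else 0))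
        = ∏ i, w (x' i) := by
  intro x'
  have hab : w (false, true) = w (true, false) := by
    rw [hw, hw]; simp; ring
  exact key w hab m m le_rfl x'
end

section
/- Let X be finite, μ a distribution on X with full support, and Enc : X × {0,1}^* → X perfectly secure (output distribution = μ when input ∼ μ and secret bits uniform). If D ⊆ X is closed under encoding in the sense that Enc(x, u) ∈ D for all x ∈ D and all u, and Enc(x, u) ∉ D whenever x ∉ D and u starts with 1, then D = X. -/
lemma stmt19_aux (m : ℕ) :
    (∑ y : Fin (m + 1) → Bool, (if y 0 = true then (1 : ℝ) else 0)) = 2 ^ m := by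
  rw [← ((Fin.consEquiv (fun _ : Fin (m+1) => Bool))).sum_comp]
  simp only [Fin.consEquiv, Fintype.sum_prod_type, Equiv.coe_fn_mk, Fin.cons_zero]
  simp [Fintype.sum_bool, Finset.card_univ]

/-- Coverage argument, abstract form: X finite, μ a full-support distribution,
Enc perfectly secure (output distribution equals μ when the covertext is
μ-distributed and the secret bits are uniform and independent). If D is closed
under encoding and its complement receives outputs only from inputs outside D
whose secret message starts with 1, then D = X. -/
theorem stmt19 {α : Type*} [Fintype α] [DecidableEq α] (m : ℕ)
    (μ : α → ℝ) (hpos : ∀ x, 0 < μ x) (hsum : ∑ x, μ x = 1)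
    (Enc : α → (Fin (m + 1) → Bool) → α)
    (hsec : ∀ x' : α,
      (∑ x, ∑ y : Fin (m + 1) → Bool,
        μ x * ((2 : ℝ) ^ (m + 1))⁻¹ * (if Enc x y = x' then 1 else 0)) = μ x')
    (D : Set α)
    (hclosed : ∀ x ∈ D, ∀ y, Enc x y ∈ D)
    (honly : ∀ x y, Enc x y ∉ D → x ∉ D ∧ y 0 = true) :
    D = Set.univ := by
  classical
  by_contra hD
  obtain ⟨x₀, hx₀⟩ : ∃ x, x ∉ D := by
    by_contra h; push_neg at h; exact hD (Set.eq_univ_iff_forall.mpr h)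
  set c : ℝ := ((2 : ℝ) ^ (m + 1))⁻¹ with hc
  set s : Finset α := Finset.univ.filter (fun x => x ∉ D) with hs
  have hx₀s : x₀ ∈ s := by simp [hs, hx₀]
  set S : ℝ := ∑ x ∈ s, μ x with hS
  have hSpos : 0 < S := Finset.sum_pos (fun x _ => hpos x) ⟨x₀, hx₀s⟩
  have h1 : S = ∑ x, ∑ y : Fin (m + 1) → Bool,
      (if Enc x y ∈ s then μ x * c else 0) := by
    rw [hS, Finset.sum_congr rfl fun x' _ => (hsec x').symm, Finset.sum_comm]
    refine Finset.sum_congr rfl fun x _ => ?_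
    rw [Finset.sum_comm]
    refine Finset.sum_congr rfl fun y _ => ?_
    rw [show (∑ x' ∈ s, μ x * c * (if Enc x y = x' then 1 else 0))
        = ∑ x' ∈ s, (if Enc x y = x' then μ x * c else 0) by
      refine Finset.sum_congr rfl fun x' _ => ?_
      split <;> simp]
    rw [Finset.sum_ite_eq]
  have h2 : S ≤ ∑ x, ∑ y : Fin (m + 1) → Bool,
      (if x ∈ s ∧ y 0 = true then μ x * c else 0) := by
    rw [h1]
    refine Finset.sum_le_sum fun x _ => Finset.sum_le_sum fun y _ => ?_
    by_cases h : Enc x y ∈ s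
    · have hE : Enc x y ∉ D := by simpa [hs] using h
      obtain ⟨hx, hy⟩ := honly x y hE
      have : x ∈ s ∧ y 0 = true := ⟨by simp [hs, hx], hy⟩
      simp [h, this]
    · have hnn : 0 ≤ μ x * c := mul_nonneg (hpos x).le (by positivity)
      rw [if_neg h]
      split
      · exact hnn
      · exact le_refl 0
  have h3 : (∑ x, ∑ y : Fin (m + 1) → Bool,
      (if x ∈ s ∧ y 0 = true then μ x * c else 0)) = S / 2 := by
    have : ∀ x : α, (∑ y : Fin (m + 1) → Bool,
        (if x ∈ s ∧ y 0 = true then μ x * c else 0))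
        = (if x ∈ s then μ x * c * 2 ^ m else 0) := by
      intro x
      by_cases hx : x ∈ s
      · simp only [hx, true_and, if_true]
        rw [show (∑ y : Fin (m + 1) → Bool, (if y 0 = true then μ x * c else 0))
            = μ x * c * ∑ y : Fin (m + 1) → Bool, (if y 0 = true then (1:ℝ) else 0) by
          rw [Finset.mul_sum]; refine Finset.sum_congr rfl fun y _ => ?_; split <;> simp]
        rw [stmt19_aux]
      · simp [hx]
    rw [Finset.sum_congr rfl fun x _ => this x, Finset.sum_ite_mem,
      Finset.univ_inter, hS, Finset.sum_div]
    refine Finset.sum_congr rfl fun x _ => ?_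
    rw [hc]
    field_simp
    ring
  rw [h3] at h2
  linarith
end
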